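/- Let n ≥ 1 and let x_1, …, x_n ∈ (0,∞) with empirical distribution function 𝔽(r) := (1/n)·#{i : x_i ≤ r}. Let 𝒦 denote the set of all functions h : [0,∞) → ℝ that are convex on [0,∞) and Lebesgue integrable over [0,∞). Suppose f̂ ∈ 𝒦 satisfies f̂(x_i) > 0 for all i and maximizes Ψ(h) := (1/n)·∑_{i=1}^n log h(x_i) − ∫_0^∞ h(x) dx over all h ∈ 𝒦 with h(x_i) > 0 for all i, and that there are points 0 = t_0 < t_1 < … < t_m with t_m > max_i x_i such that f̂ is affine on each interval [t_{k−1}, t_k], f̂ = 0 on [t_m, ∞), and at each t_k (1 ≤ k ≤ m) the right derivative of f̂ is strictly larger than the left derivative. Let F̂(r) := ∫_0^r f̂(x) dx. Then for every k ∈ {0, 1, …, m−1} and every r ∈ (t_k, t_{k+1}], ∫_{t_k}^r 𝔽(x) dx ≤ ∫_{t_k}^r F̂(x) dx. -/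

import Mathlib

set_option maxHeartbeats 1000000
open MeasureTheory Set

section Aux

lemma aux_convexOn_congr {s : Set ℝ} {f g : ℝ → ℝ} (hf : ConvexOn ℝ s f)
    (h : ∀ x ∈ s, f x = g x) : ConvexOn ℝ s g := by
  refine ⟨hf.1, fun x hx y hy a b ha hb hab => ?_⟩
  rw [← h _ (hf.1 hx hy ha hb hab), ← h _ hx, ← h _ hy]
  exact hf.2 hx hy ha hb hab

lemma aux_affine_convexOn (b c : ℝ) : ConvexOn ℝ Set.univ (fun y : ℝ => b * y + c) := by
  refine ⟨convex_univ, fun x _ y _ p q hp hq hpq => ?_⟩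
  simp only [smul_eq_mul]
  exact le_of_eq (by linear_combination (-c) * hpq)

lemma aux_quad_convexOn {a : ℝ} (ha : 0 ≤ a) (b c : ℝ) :
    ConvexOn ℝ Set.univ (fun y : ℝ => a * y ^ 2 + (b * y + c)) := by
  have h1 : ConvexOn ℝ Set.univ (fun y : ℝ => y ^ 2) := Even.convexOn_pow even_two
  have h2 := h1.smul ha
  have h3 : ConvexOn ℝ Set.univ (fun y : ℝ => a * y ^ 2) := by
    refine aux_convexOn_congr h2 (fun x _ => ?_)
    simp [smul_eq_mul]
  exact h3.add (aux_affine_convexOn b c)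

/-- Glue two convex pieces along `b`, given a separating slope `L`. -/
lemma aux_glue_Icc {f : ℝ → ℝ} {a b c L : ℝ} (hab : a ≤ b) (hbc : b ≤ c)
    (h1 : ConvexOn ℝ (Icc a b) f) (h2 : ConvexOn ℝ (Icc b c) f)
    (hL1 : ∀ x, a ≤ x → x < b → f b - f x ≤ L * (b - x))
    (hL2 : ∀ z, b < z → z ≤ c → L * (z - b) ≤ f z - f b) :
    ConvexOn ℝ (Icc a c) f := by
  rw [convexOn_iff_slope_mono_adjacent]
  refine ⟨convex_Icc a c, fun x y z hx hz hxy hyz => ?_⟩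
  rcases le_or_gt z b with hzb | hbz
  · exact h1.slope_mono_adjacent ⟨hx.1, le_trans (le_of_lt (hxy.trans hyz)) hzb⟩
      ⟨le_trans hx.1 (le_of_lt (hxy.trans hyz)), hzb⟩ hxy hyz
  rcases le_or_gt b x with hbx | hxb
  · exact h2.slope_mono_adjacent ⟨hbx, le_trans (le_of_lt (hxy.trans hyz)) hz.2⟩
      ⟨le_trans hbx (le_of_lt (hxy.trans hyz)), hz.2⟩ hxy hyz
  -- now x < b < z
  have hd0 : (0:ℝ) < y - x := by linarith
  have hd2 : (0:ℝ) < z - y := by linarith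
  rw [div_le_div_iff₀ hd0 hd2]
  rcases lt_trichotomy y b with hyb | hyb | hyb
  · -- y < b
    have H1 := h1.slope_mono_adjacent (x := x) (y := y) (z := b)
      ⟨hx.1, le_of_lt hxb⟩ ⟨hab, le_refl b⟩ hxy hyb
    rw [div_le_div_iff₀ hd0 (by linarith)] at H1
    have H2 := hL1 y (by linarith [hx.1]) hyb
    have H3 := hL2 z hbz hz.2
    -- from H1, H2 : (f y - f x) ≤ L * (y - x)  (after dividing by b - y > 0)
    have hby : (0:ℝ) < b - y := by linarith
    have hp : (f y - f x) * (b - y) ≤ L * (y - x) * (b - y) := by nlinarith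
    have hp' : f y - f x ≤ L * (y - x) := by
      have := le_of_mul_le_mul_right (by linarith [hp] : (f y - f x) * (b - y) ≤ (L * (y - x)) * (b - y)) hby
      linarith
    -- f z - f y = (f b - f y) + (f z - f b) ≥ (f y - f x)/(y-x) * (b - y) + L * (z - b)
    -- final: (f y - f x) * (z - y) ≤ (f z - f y) * (y - x)
    nlinarith [H1, hp', H3, mul_le_mul_of_nonneg_right hp' (le_of_lt hd2)]
  · -- y = b
    subst hyb
    have H2 := hL1 x hx.1 hxb
    have H3 := hL2 z hbz hz.2
    nlinarith [H2, H3]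
  · -- b < y
    have H3 := hL2 y hyb (by linarith [hz.2])
    have H1 := h2.slope_mono_adjacent (x := b) (y := y) (z := z)
      ⟨le_refl b, hbc⟩ ⟨le_of_lt hbz, hz.2⟩ hyb hyz
    rw [div_le_div_iff₀ (by linarith) hd2] at H1
    have H2 := hL1 x hx.1 hxb
    -- want (f y - f x) * (z - y) ≤ (f z - f y) * (y - x)
    have hyb' : (0:ℝ) < y - b := by linarith
    -- slope b y =: s2 ≥ L ; slope y z ≥ s2
    have hs2 : L * (y - b) ≤ f y - f b := H3
    -- f y - f x ≤ L*(b-x) + (f y - f b) ≤ ((f y - f b)/(y-b)) * (y - x)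
    nlinarith [mul_le_mul_of_nonneg_right H2 (le_of_lt hd2),
      mul_le_mul_of_nonneg_right hs2 (le_of_lt hd2),
      mul_le_mul_of_nonneg_left H1 (by linarith [hxb] : (0:ℝ) ≤ b - x)]

lemma aux_glue_Ici {f : ℝ → ℝ} {a b L : ℝ} (hab : a ≤ b)
    (h1 : ConvexOn ℝ (Icc a b) f) (h2 : ConvexOn ℝ (Ici b) f)
    (hL1 : ∀ x, a ≤ x → x < b → f b - f x ≤ L * (b - x))
    (hL2 : ∀ z, b < z → L * (z - b) ≤ f z - f b) :
    ConvexOn ℝ (Ici a) f := by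
  rw [convexOn_iff_slope_mono_adjacent]
  refine ⟨convex_Ici a, fun x y z hx hz hxy hyz => ?_⟩
  have hcc : ∀ c, b ≤ c → ConvexOn ℝ (Icc a c) f := by
    intro c hbc
    refine aux_glue_Icc hab hbc h1 (h2.subset (Icc_subset_Ici_self) (convex_Icc b c)) hL1 ?_
    exact fun z hz _ => hL2 z hz
  have hx' : a ≤ x := hx
  have hz' : a ≤ z := hz
  rcases le_or_gt z b with hzb | hbz
  · exact (hcc b le_rfl).slope_mono_adjacent ⟨hx', by linarith⟩ ⟨hz', hzb⟩ hxy hyz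
  · exact (hcc z (le_of_lt hbz)).slope_mono_adjacent ⟨hx', by linarith⟩ ⟨hz', le_rfl⟩ hxy hyz

lemma aux_step_intervalIntegrable (c a b : ℝ) :
    IntervalIntegrable (fun u => if c ≤ u then (1:ℝ) else 0) volume a b := by
  have : (fun u => if c ≤ u then (1:ℝ) else 0) = (Ici c).indicator (fun _ => (1:ℝ)) := by
    funext u; simp [Set.indicator_apply, mem_Ici]
  rw [this, intervalIntegrable_iff]
  exact IntegrableOn.indicator (integrableOn_const measure_Ioc_lt_top.ne)
    measurableSet_Ici

lemma aux_step_integral {a b : ℝ} (c : ℝ) (hab : a ≤ b) :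
    ∫ u in a..b, (if c ≤ u then (1:ℝ) else 0) = max 0 (b - max a c) := by
  rcases le_or_gt c a with hca | hac
  · rw [max_eq_left hca, max_eq_right (by linarith)]
    rw [intervalIntegral.integral_of_le hab]
    rw [setIntegral_congr_fun measurableSet_Ioc
      (fun u hu => if_pos (le_trans hca (le_of_lt hu.1)))]
    simp [Real.volume_Ioc, ENNReal.toReal_ofReal (by linarith : (0:ℝ) ≤ b - a), hab]
  rcases le_or_gt c b with hcb | hbc
  · rw [max_eq_right (le_of_lt hac), max_eq_right (by linarith)]
    have h1 : ∫ u in a..c, (if c ≤ u then (1:ℝ) else 0) = 0 := by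
      rw [intervalIntegral.integral_of_le (le_of_lt hac)]
      have : EqOn (fun u => if c ≤ u then (1:ℝ) else 0) (fun _ => (0:ℝ)) (Ioo a c) :=
        fun u hu => if_neg (not_le.mpr hu.2)
      rw [integral_Ioc_eq_integral_Ioo, setIntegral_congr_fun measurableSet_Ioo this]
      simp
    have h2 : ∫ u in c..b, (if c ≤ u then (1:ℝ) else 0) = b - c := by
      rw [intervalIntegral.integral_of_le hcb]
      rw [setIntegral_congr_fun measurableSet_Ioc
        (fun u hu => if_pos (le_of_lt hu.1))]
      simp [Real.volume_Ioc, ENNReal.toReal_ofReal (by linarith : (0:ℝ) ≤ b - c), hcb]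
    rw [← intervalIntegral.integral_add_adjacent_intervals
      (aux_step_intervalIntegrable c a c) (aux_step_intervalIntegrable c c b), h1, h2, zero_add]
  · rw [max_eq_right (le_of_lt hac), max_eq_left (by linarith : b - c ≤ 0)]
    rw [intervalIntegral.integral_of_le hab]
    rw [setIntegral_congr_fun measurableSet_Ioc
      (fun u hu => if_neg (by push_neg; exact lt_of_le_of_lt hu.2 hbc))]
    simp

lemma aux_fubini {f : ℝ → ℝ} {c d : ℝ} (hcd : c ≤ d) (hint : IntegrableOn f (Ioc c d)) :
    ∫ u in Ioc c d, (∫ x in Ioc c u, f x) = ∫ x in Ioc c d, (d - x) * f x := by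
  set μ := volume.restrict (Ioc c d) with hμ
  haveI : IsFiniteMeasure μ := ⟨by
    rw [hμ, Measure.restrict_apply_univ]; exact measure_Ioc_lt_top⟩
  set F : ℝ → ℝ → ℝ := fun u x => if x ≤ u then f x else 0 with hF
  have hf2 : Integrable (fun p : ℝ × ℝ => f p.2) (μ.prod μ) := by
    have := (integrable_const (1:ℝ) (μ := μ)).mul_prod (hint : Integrable f μ)
    simpa using this
  have hmeas : MeasurableSet {p : ℝ × ℝ | p.2 ≤ p.1} :=
    measurableSet_le measurable_snd measurable_fst
  have hunc : Function.uncurry F = {p : ℝ × ℝ | p.2 ≤ p.1}.indicator (fun p => f p.2) := by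
    funext p
    simp only [Function.uncurry, hF, Set.indicator_apply, mem_setOf_eq]
  have hintF : Integrable (Function.uncurry F) (μ.prod μ) := by
    refine Integrable.mono' hf2.norm ?_ ?_
    · rw [hunc]; exact hf2.aestronglyMeasurable.indicator hmeas
    · refine Filter.Eventually.of_forall (fun p => ?_)
      rw [hunc]
      exact norm_indicator_le_norm_self _ p
  have hswap := MeasureTheory.integral_integral_swap (μ := μ) (ν := μ) (f := F) hintF
  have hL : ∫ u, (∫ x, F u x ∂μ) ∂μ = ∫ u in Ioc c d, (∫ x in Ioc c u, f x) := by
    refine setIntegral_congr_fun measurableSet_Ioc (fun u hu => ?_)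
    have : (fun x => F u x) = (Iic u).indicator f := by
      funext v; simp only [hF, Set.indicator_apply, mem_Iic]
    rw [this, hμ, setIntegral_indicator measurableSet_Iic, Set.Ioc_inter_Iic,
      min_eq_right hu.2]
  have hR : ∫ x, (∫ u, F u x ∂μ) ∂μ = ∫ x in Ioc c d, (d - x) * f x := by
    refine setIntegral_congr_fun measurableSet_Ioc (fun v hv => ?_)
    have : (fun u => F u v) = (Ici v).indicator (fun _ => f v) := by
      funext u; simp only [hF, Set.indicator_apply, mem_Ici]
    rw [this, hμ, setIntegral_indicator measurableSet_Ici]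
    have hset : Ioc c d ∩ Ici v = Icc v d := by
      ext u
      simp only [mem_inter_iff, mem_Ioc, mem_Ici, mem_Icc]
      constructor
      · rintro ⟨⟨_, h2⟩, h3⟩; exact ⟨h3, h2⟩
      · rintro ⟨h1, h2⟩; exact ⟨⟨lt_of_lt_of_le hv.1 h1, h2⟩, h1⟩
    rw [hset, setIntegral_const, Real.volume_real_Icc_of_le (by linarith [hv.2] : v ≤ d), smul_eq_mul]
  rw [← hL, hswap, hR]

lemma aux_log_lb {u : ℝ} (hu : 0 ≤ u) : u - u ^ 2 ≤ Real.log (1 + u) := by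
  have h1 : (0:ℝ) < 1 + u := by linarith
  have h2 := Real.log_le_sub_one_of_pos (show (0:ℝ) < (1+u)⁻¹ by positivity)
  rw [Real.log_inv] at h2
  have h3 : (1 + u) * (1 + u)⁻¹ = 1 := mul_inv_cancel₀ (ne_of_gt h1)
  nlinarith [h2, h3, sq_nonneg u, mul_pos h1 h1]

end Aux

/-- Forward integral inequality for the maximum likelihood estimator:
`∫_{t_k}^r 𝔽 ≤ ∫_{t_k}^r F̂` for all `r ∈ (t_k, t_{k+1}]`, where `F̂(u) = ∫_0^u f̂`. -/
theorem mle_forward_integral_inequality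
    (n : ℕ) (hn : 1 ≤ n) (x : Fin n → ℝ) (hx : ∀ i, 0 < x i)
    (EDF : ℝ → ℝ)
    (hEDF : ∀ r : ℝ, EDF r = (n : ℝ)⁻¹ * (Finset.univ.filter fun i => x i ≤ r).card)
    (fhat : ℝ → ℝ)
    (hfconv : ConvexOn ℝ (Ici 0) fhat) (hfint : IntegrableOn fhat (Ici 0))
    (hfpos : ∀ i, 0 < fhat (x i))
    (hopt : ∀ h : ℝ → ℝ, ConvexOn ℝ (Ici 0) h → IntegrableOn h (Ici 0) →
      (∀ i, 0 < h (x i)) →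
      (n : ℝ)⁻¹ * ∑ i, Real.log (h (x i)) - ∫ y in Ici (0 : ℝ), h y ≤
        (n : ℝ)⁻¹ * ∑ i, Real.log (fhat (x i)) - ∫ y in Ici (0 : ℝ), fhat y)
    (m : ℕ) (t : ℕ → ℝ)
    (ht0 : t 0 = 0) (htlt : ∀ k, k < m → t k < t (k + 1))
    (htmax : ∀ i, x i < t m)
    (haff : ∀ k, 1 ≤ k → k ≤ m → ∃ α β : ℝ,
      ∀ y ∈ Icc (t (k - 1)) (t k), fhat y = α * y + β)
    (htail : ∀ y, t m ≤ y → fhat y = 0)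
    (hkink : ∀ k, 1 ≤ k → k ≤ m →
      derivWithin fhat (Iic (t k)) (t k) < derivWithin fhat (Ici (t k)) (t k)) :
    ∀ k, k < m → ∀ r ∈ Ioc (t k) (t (k + 1)),
      ∫ u in (t k)..r, EDF u ≤ ∫ u in (t k)..r, (∫ v in (0 : ℝ)..u, fhat v) := by
  intro k hkm r hr
  have hk1m : k + 1 ≤ m := hkm
  -- basic facts about the knots
  have tmono : ∀ i j : ℕ, i ≤ j → j ≤ m → t i ≤ t j := by
    intro i j hij hjm
    induction j with
    | zero => simp [Nat.le_zero.mp hij]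
    | succ j ih =>
      rcases Nat.lt_or_ge i (j+1) with h | h
      · have h1 : i ≤ j := Nat.lt_succ_iff.mp h
        have h2 : j ≤ m := le_trans (Nat.le_succ j) hjm
        exact le_trans (ih h1 h2) (le_of_lt (htlt j (Nat.lt_of_succ_le hjm)))
      · have : i = j + 1 := le_antisymm hij h
        rw [this]
  have ht0le : ∀ j, j ≤ m → 0 ≤ t j := by
    intro j hj
    have := tmono 0 j (Nat.zero_le j) hj
    rwa [ht0] at this
  have htk0 : 0 ≤ t k := ht0le k (le_of_lt hkm)
  have htkr : t k < r := hr.1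
  have hrtk1 : r ≤ t (k + 1) := hr.2
  have hr0 : 0 < r := lt_of_le_of_lt htk0 htkr
  have htm0 : 0 ≤ t m := ht0le m le_rfl
  have htkr' : t k ≤ r := le_of_lt htkr
  have htk1 : t k < t (k+1) := htlt k hkm
  -- fhat is nonnegative on [0, ∞)
  have hf0 : ∀ y, 0 ≤ y → 0 ≤ fhat y := by
    intro y hy
    rcases le_or_gt (t m) y with hym | hym
    · rw [htail y hym]
    · have hy2 : (0:ℝ) ≤ 2 * t m - y := by linarith
      have hcomb := hfconv.2 (mem_Ici.mpr hy) (mem_Ici.mpr hy2)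
        (by norm_num : (0:ℝ) ≤ 1/2) (by norm_num : (0:ℝ) ≤ 1/2) (by norm_num)
      have hpt : (1/2 : ℝ) • y + (1/2 : ℝ) • (2 * t m - y) = t m := by
        simp only [smul_eq_mul]; ring
      rw [hpt, htail (t m) le_rfl, htail (2 * t m - y) (by linarith)] at hcomb
      simp only [smul_eq_mul] at hcomb
      linarith
  -- the affine piece containing (t k, r]
  obtain ⟨α, β, hαβ⟩ := haff (k+1) (Nat.le_add_left 1 k) hk1m
  rw [Nat.add_sub_cancel] at hαβ
  have hftk : fhat (t k) = α * t k + β := hαβ _ ⟨le_rfl, le_of_lt htk1⟩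
  have hftk1 : fhat (t (k+1)) = α * t (k+1) + β := hαβ _ ⟨le_of_lt htk1, le_rfl⟩
  have hfr : fhat r = α * r + β := hαβ r ⟨htkr', hrtk1⟩
  have hα0 : α ≤ 0 := by
    set z := max (t m) (t (k+1)) + 1 with hz
    have hz1 : t (k+1) < z := by
      have := le_max_right (t m) (t (k+1)); linarith
    have hz2 : t m ≤ z := by
      have := le_max_left (t m) (t (k+1)); linarith
    have hz0 : (0:ℝ) ≤ z := le_trans htm0 hz2
    have hfz : fhat z = 0 := htail z hz2
    have hs := hfconv.slope_mono_adjacent (mem_Ici.mpr htk0) (mem_Ici.mpr hz0) htk1 hz1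
    have hL : (fhat (t (k+1)) - fhat (t k)) / (t (k+1) - t k) = α := by
      rw [hftk1, hftk]
      rw [show α * t (k+1) + β - (α * t k + β) = α * (t (k+1) - t k) by ring,
        mul_div_assoc, div_self (ne_of_gt (by linarith : (0:ℝ) < t (k+1) - t k)), mul_one]
    rw [hL, hfz] at hs
    have hden : (0:ℝ) < z - t (k+1) := by linarith
    have hnum : 0 ≤ fhat (t (k+1)) := hf0 _ (ht0le (k+1) hk1m)
    have : (0 - fhat (t (k+1))) / (z - t (k+1)) ≤ 0 :=
      div_nonpos_of_nonpos_of_nonneg (by linarith) (le_of_lt hden)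
    linarith
  have hfr0 : 0 ≤ fhat r := hf0 r (le_of_lt hr0)
  have hftk0 : 0 ≤ fhat (t k) := hf0 _ htk0
  have hfrftk : fhat r ≤ fhat (t k) := by nlinarith [hfr, hftk]
  -- the perturbation direction
  set g : ℝ → ℝ := fun y => max 0 (r - max (t k) y) with hg
  have hg0 : ∀ y, 0 ≤ g y := fun y => le_max_left _ _
  have hgbd : ∀ y, g y ≤ r - t k := by
    intro y
    exact max_le (by linarith) (sub_le_sub_left (le_max_left (t k) y) r)
  have hgleft : ∀ y, y ≤ t k → g y = r - t k := by
    intro y hy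
    rw [hg]; simp only
    rw [max_eq_left hy, max_eq_right (by linarith : (0:ℝ) ≤ r - t k)]
  have hgmid : ∀ y, t k ≤ y → y ≤ r → g y = r - y := by
    intro y h1 h2
    rw [hg]; simp only
    rw [max_eq_right h1, max_eq_right (by linarith : (0:ℝ) ≤ r - y)]
  have hgright : ∀ y, r ≤ y → g y = 0 := by
    intro y hy
    rw [hg]; simp only
    rw [max_eq_right (le_trans htkr' hy), max_eq_left (by linarith : r - y ≤ 0)]
  -- the perturbed functions are convex for small ε
  obtain ⟨ε₀, hε₀pos, hconvall⟩ : ∃ ε₀, 0 < ε₀ ∧ ∀ ε, 0 < ε → ε ≤ ε₀ →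
      ConvexOn ℝ (Ici 0) (fun y => fhat y * (1 + ε * g y)) := by
    -- middle piece: quadratic, convex for ε ≥ 0
    have hB : ∀ ε : ℝ, 0 ≤ ε → ConvexOn ℝ (Icc (t k) r) (fun y => fhat y * (1 + ε * g y)) := by
      intro ε hε
      have hq := aux_quad_convexOn (a := -α * ε) (by nlinarith) (α + α*ε*r - β*ε) (β*(1+ε*r))
      refine aux_convexOn_congr (hq.subset (subset_univ _) (convex_Icc _ _)) ?_
      intro y hy
      rw [hαβ y ⟨hy.1, le_trans hy.2 hrtk1⟩, hgmid y hy.1 hy.2]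
      ring
    -- right piece: fhat itself
    have hC : ∀ ε : ℝ, ConvexOn ℝ (Ici r) (fun y => fhat y * (1 + ε * g y)) := by
      intro ε
      refine aux_convexOn_congr (hfconv.subset (Ici_subset_Ici.mpr (le_of_lt hr0)) (convex_Ici r)) ?_
      intro y hy
      rw [hgright y hy]
      ring
    -- slope from the right at r
    have hL2r : ∀ ε : ℝ, 0 ≤ ε → ∀ z, r < z →
        (α - ε * fhat r) * (z - r) ≤ fhat z * (1 + ε * g z) - fhat r * (1 + ε * g r) := by
      intro ε hε z hz
      rw [hgright z (le_of_lt hz), hgright r le_rfl]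
      have hs := hfconv.slope_mono_adjacent (mem_Ici.mpr htk0)
        (mem_Ici.mpr (le_trans (le_of_lt hr0) (le_of_lt hz))) htkr hz
      have hL : (fhat r - fhat (t k)) / (r - t k) = α := by
        rw [hfr, hftk, show α*r+β - (α*t k+β) = α*(r - t k) by ring, mul_div_assoc,
          div_self (ne_of_gt (by linarith : (0:ℝ) < r - t k)), mul_one]
      rw [hL, le_div_iff₀ (by linarith : (0:ℝ) < z - r)] at hs
      nlinarith [mul_nonneg (mul_nonneg hε hfr0) (by linarith : (0:ℝ) ≤ z - r)]
    -- slope from the left at r, within the middle piece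
    have hL1rB : ∀ ε : ℝ, 0 ≤ ε → ∀ x', t k ≤ x' → x' < r →
        fhat r * (1 + ε * g r) - fhat x' * (1 + ε * g x') ≤ (α - ε * fhat r) * (r - x') := by
      intro ε hε x' h1 h2
      rw [hgright r le_rfl, hgmid x' h1 (le_of_lt h2)]
      have hfx : fhat x' = α * x' + β := hαβ x' ⟨h1, by linarith⟩
      have hfxr : fhat r ≤ fhat x' := by nlinarith
      have key : fhat r * (1 + ε * 0) - fhat x' * (1 + ε * (r - x'))
          = (α - ε * fhat x') * (r - x') := by rw [hfr, hfx]; ring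
      rw [key]
      nlinarith [mul_nonneg (mul_nonneg hε (sub_nonneg.mpr hfxr))
        (by linarith : (0:ℝ) ≤ r - x')]
    rcases Nat.eq_zero_or_pos k with hk0 | hk1
    · -- case k = 0 : only two pieces
      refine ⟨1, one_pos, fun ε hε hε1 => ?_⟩
      have htkz : t k = 0 := by rw [hk0, ht0]
      have hIcc : ConvexOn ℝ (Icc 0 r) (fun y => fhat y * (1 + ε * g y)) := by
        have := hB ε (le_of_lt hε); rwa [htkz] at this
      refine aux_glue_Ici (le_of_lt hr0) hIcc (hC ε) (L := α - ε * fhat r) ?_ ?_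
      · intro x' h1 h2
        exact hL1rB ε (le_of_lt hε) x' (by rw [htkz]; exact h1) h2
      · intro z hz; exact hL2r ε (le_of_lt hε) z hz
    · -- case k ≥ 1 : three pieces
      obtain ⟨αk, βk, hkaff⟩ := haff k hk1 (le_of_lt hkm)
      have hkk : k - 1 + 1 = k := Nat.sub_add_cancel hk1
      have htk1k : t (k-1) < t k := by
        have := htlt (k-1) (by omega); rwa [hkk] at this
      have htk10 : 0 ≤ t (k-1) := ht0le (k-1) (by omega)
      have hftk' : fhat (t k) = αk * t k + βk := hkaff _ ⟨le_of_lt htk1k, le_rfl⟩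
      have hftk1' : fhat (t (k-1)) = αk * t (k-1) + βk := hkaff _ ⟨le_rfl, le_of_lt htk1k⟩
      have hdw1 : derivWithin fhat (Iic (t k)) (t k) = αk := by
        have hev : ∀ᶠ y in nhdsWithin (t k) (Iic (t k)), fhat y = αk * y + βk := by
          filter_upwards [nhdsWithin_le_nhds (Ioi_mem_nhds htk1k), self_mem_nhdsWithin]
            with y h1 h2
          exact hkaff y ⟨le_of_lt h1, h2⟩
        have hda : HasDerivWithinAt (fun y => αk * y + βk) αk (Iic (t k)) (t k) := by
          simpa using (((hasDerivAt_id (t k)).const_mul αk).add_const βk).hasDerivWithinAt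
        have hd : HasDerivWithinAt fhat αk (Iic (t k)) (t k) :=
          hda.congr_of_eventuallyEq hev hftk'
        exact hd.derivWithin (uniqueDiffOn_Iic (t k) (t k) (mem_Iic.mpr le_rfl))
      have hdw2 : derivWithin fhat (Ici (t k)) (t k) = α := by
        have hev : ∀ᶠ y in nhdsWithin (t k) (Ici (t k)), fhat y = α * y + β := by
          filter_upwards [nhdsWithin_le_nhds (Iio_mem_nhds htk1), self_mem_nhdsWithin]
            with y h1 h2
          exact hαβ y ⟨h2, le_of_lt h1⟩
        have hda : HasDerivWithinAt (fun y => α * y + β) α (Ici (t k)) (t k) := by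
          simpa using (((hasDerivAt_id (t k)).const_mul α).add_const β).hasDerivWithinAt
        have hd : HasDerivWithinAt fhat α (Ici (t k)) (t k) :=
          hda.congr_of_eventuallyEq hev hftk
        exact hd.derivWithin (uniqueDiffOn_Ici (t k) (t k) (mem_Ici.mpr le_rfl))
      have hκ : αk < α := by
        have := hkink k hk1 (le_of_lt hkm); rwa [hdw1, hdw2] at this
      refine ⟨(α - αk)/(fhat (t k) + 1),
        div_pos (sub_pos.mpr hκ) (by linarith), fun ε hε hε1 => ?_⟩
      have hεftk : ε * fhat (t k) ≤ α - αk := by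
        have h2 : ε * (fhat (t k) + 1) ≤ α - αk :=
          (le_div_iff₀ (by linarith : (0:ℝ) < fhat (t k) + 1)).mp hε1
        nlinarith
      have hw0 : 0 ≤ ε * (r - t k) := by nlinarith
      have hw1 : (1:ℝ) ≤ 1 + ε * (r - t k) := by linarith
      -- left piece: a positive multiple of fhat
      have hA : ConvexOn ℝ (Icc 0 (t k)) (fun y => fhat y * (1 + ε * g y)) := by
        have hsub : Icc (0:ℝ) (t k) ⊆ Ici 0 := fun y hy => hy.1
        have hs := (hfconv.subset hsub (convex_Icc _ _)).smul
          (by linarith : (0:ℝ) ≤ 1 + ε * (r - t k))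
        refine aux_convexOn_congr hs ?_
        intro y hy
        rw [hgleft y hy.2]
        simp only [smul_eq_mul]
        ring
      -- slope bound to the left of t k
      have hL1A : ∀ x', 0 ≤ x' → x' < t k →
          fhat (t k) * (1 + ε * g (t k)) - fhat x' * (1 + ε * g x')
            ≤ (αk * (1 + ε * (r - t k))) * (t k - x') := by
        intro x' h0 h1
        rw [hgleft _ le_rfl, hgleft _ (le_of_lt h1)]
        have hfx : fhat (t k) - fhat x' ≤ αk * (t k - x') := by
          rcases le_or_gt (t (k-1)) x' with hc | hc
          · have hxv := hkaff x' ⟨hc, le_of_lt h1⟩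
            rw [hftk', hxv]
            nlinarith [hftk', hxv]
          · have hs := hfconv.slope_mono_adjacent (mem_Ici.mpr h0) (mem_Ici.mpr htk0) hc htk1k
            have hsl : (fhat (t k) - fhat (t (k-1))) / (t k - t (k-1)) = αk := by
              rw [hftk', hftk1',
                show αk * t k + βk - (αk * t (k-1) + βk) = αk * (t k - t (k-1)) by ring,
                mul_div_assoc, div_self (ne_of_gt (by linarith : (0:ℝ) < t k - t (k-1))),
                mul_one]
            rw [hsl, div_le_iff₀ (by linarith : (0:ℝ) < t (k-1) - x')] at hs
            nlinarith [hftk', hftk1']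
        calc fhat (t k) * (1 + ε * (r - t k)) - fhat x' * (1 + ε * (r - t k))
            = (fhat (t k) - fhat x') * (1 + ε * (r - t k)) := by ring
          _ ≤ (αk * (t k - x')) * (1 + ε * (r - t k)) := by
              exact mul_le_mul_of_nonneg_right hfx (by linarith)
          _ = (αk * (1 + ε * (r - t k))) * (t k - x') := by ring
      -- glue at t k
      have hIcc : ConvexOn ℝ (Icc 0 r) (fun y => fhat y * (1 + ε * g y)) := by
        refine aux_glue_Icc htk0 htkr' hA (hB ε (le_of_lt hε))
          (L := αk * (1 + ε * (r - t k))) hL1A ?_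
        intro z h1 h2
        rw [hgmid z (le_of_lt h1) h2, hgleft _ le_rfl]
        have hfz : fhat z = α * z + β := hαβ z ⟨le_of_lt h1, le_trans h2 hrtk1⟩
        have hz1 : (0:ℝ) < z - t k := by linarith
        have hwz : 1 + ε * (r - z) ≤ 1 + ε * (r - t k) := by nlinarith
        have step2 : α * (1 + ε * (r - t k)) ≤ α * (1 + ε * (r - z)) :=
          mul_le_mul_of_nonpos_left hwz hα0
        have scalar : αk * (1 + ε * (r - t k)) ≤ α * (1 + ε * (r - z)) - ε * fhat (t k) := by
          nlinarith [mul_nonneg hw0 (le_of_lt (sub_pos.mpr hκ))]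
        calc (αk * (1 + ε * (r - t k))) * (z - t k)
            ≤ (α * (1 + ε * (r - z)) - ε * fhat (t k)) * (z - t k) :=
              mul_le_mul_of_nonneg_right scalar (le_of_lt hz1)
          _ = fhat z * (1 + ε * (r - z)) - fhat (t k) * (1 + ε * (r - t k)) := by
              rw [hfz, hftk]; ring
      -- glue at r
      refine aux_glue_Ici (le_of_lt hr0) hIcc (hC ε) (L := α - ε * fhat r) ?_
        (fun z hz => hL2r ε (le_of_lt hε) z hz)
      intro x' h0 h2
      rcases le_or_gt (t k) x' with hc | hc
      · exact hL1rB ε (le_of_lt hε) x' hc h2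
      · have e1 := hL1A x' h0 hc
        have e2 := hL1rB ε (le_of_lt hε) (t k) le_rfl htkr
        have hLle : αk * (1 + ε * (r - t k)) ≤ α - ε * fhat r := by
          nlinarith [mul_nonneg hw0 (le_of_lt (sub_pos.mpr hκ)),
            mul_nonpos_of_nonpos_of_nonneg hα0 hw0,
            mul_nonneg (le_of_lt hε) (sub_nonneg.mpr hfrftk)]
        nlinarith [mul_le_mul_of_nonneg_right hLle (le_of_lt (sub_pos.mpr hc))]
  -- integrability of fhat * g
  have hgcont : Continuous g := by
    rw [hg]
    exact continuous_const.max (continuous_const.sub (continuous_const.max continuous_id))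
  have hfg_int : IntegrableOn (fun y => fhat y * g y) (Ici 0) := by
    have h1 : Integrable (fun y => g y * fhat y) (volume.restrict (Ici 0)) :=
      Integrable.bdd_mul hfint (hgcont.aestronglyMeasurable)
        (c := r - t k) (Filter.Eventually.of_forall fun y => by rw [Real.norm_eq_abs, abs_of_nonneg (hg0 y)]; exact hgbd y)
    exact h1.congr (Filter.Eventually.of_forall (fun y => mul_comm _ _))
  -- the key inequality from optimality
  have hnR : (0:ℝ) < (n:ℝ)⁻¹ := by
    have : (0:ℝ) < (n:ℝ) := by exact_mod_cast Nat.lt_of_lt_of_le Nat.zero_lt_one hn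
    positivity
  have hkey : (n:ℝ)⁻¹ * ∑ i, g (x i) ≤ ∫ y in Ici (0:ℝ), fhat y * g y := by
    set I := ∫ y in Ici (0:ℝ), fhat y * g y with hI
    have hstep : ∀ ε : ℝ, 0 < ε → ε ≤ ε₀ →
        (n:ℝ)⁻¹ * ∑ i, g (x i) - I ≤ ε * (r - t k)^2 := by
      intro ε hε hε1
      have hconv := hconvall ε hε hε1
      have hHint : IntegrableOn (fun y => fhat y * (1 + ε * g y)) (Ici 0) := by
        have heq : (fun y => fhat y * (1 + ε * g y))
            = fun y => fhat y + ε * (fhat y * g y) := by funext y; ring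
        rw [heq]
        exact hfint.add (hfg_int.const_mul ε)
      have hHpos : ∀ i, 0 < fhat (x i) * (1 + ε * g (x i)) := by
        intro i
        have h1 : 0 ≤ ε * g (x i) := mul_nonneg (le_of_lt hε) (hg0 _)
        nlinarith [hfpos i]
      have hineq := hopt _ hconv hHint hHpos
      have hsum : ∑ i, Real.log (fhat (x i) * (1 + ε * g (x i)))
          = ∑ i, Real.log (fhat (x i)) + ∑ i, Real.log (1 + ε * g (x i)) := by
        rw [← Finset.sum_add_distrib]
        refine Finset.sum_congr rfl (fun i _ => ?_)
        have h1 : 0 ≤ ε * g (x i) := mul_nonneg (le_of_lt hε) (hg0 _)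
        exact Real.log_mul (ne_of_gt (hfpos i)) (by linarith)
      have hintH : ∫ y in Ici (0:ℝ), fhat y * (1 + ε * g y)
          = (∫ y in Ici (0:ℝ), fhat y) + ε * I := by
        have heq : (fun y => fhat y * (1 + ε * g y))
            = fun y => fhat y + ε * (fhat y * g y) := by funext y; ring
        rw [heq, integral_add hfint (hfg_int.const_mul ε), integral_const_mul]
      rw [hsum] at hineq
      rw [hintH] at hineq
      have hlog : ε * ((n:ℝ)⁻¹ * ∑ i, g (x i)) - ε^2 * (r - t k)^2
          ≤ (n:ℝ)⁻¹ * ∑ i, Real.log (1 + ε * g (x i)) := by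
        have hterm : ∀ i : Fin n, ε * g (x i) - ε^2 * (r - t k)^2
            ≤ Real.log (1 + ε * g (x i)) := by
          intro i
          have h1 : 0 ≤ ε * g (x i) := mul_nonneg (le_of_lt hε) (hg0 _)
          have h2 := aux_log_lb h1
          have h3 : (ε * g (x i))^2 ≤ ε^2 * (r - t k)^2 := by
            have h4 : (g (x i))^2 ≤ (r - t k)^2 := by
              nlinarith [hgbd (x i), hg0 (x i)]
            calc (ε * g (x i))^2 = ε^2 * (g (x i))^2 := by ring
              _ ≤ ε^2 * (r - t k)^2 := mul_le_mul_of_nonneg_left h4 (sq_nonneg ε)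
          nlinarith
        have hsb := Finset.sum_le_sum (fun i (_ : i ∈ Finset.univ) => hterm i)
        rw [Finset.sum_sub_distrib, Finset.sum_const, Finset.card_univ, Fintype.card_fin] at hsb
        have hc : (n:ℝ)⁻¹ * (∑ i, (ε * g (x i)) - n • (ε^2 * (r - t k)^2))
            ≤ (n:ℝ)⁻¹ * ∑ i, Real.log (1 + ε * g (x i)) :=
          mul_le_mul_of_nonneg_left hsb (le_of_lt hnR)
        have hn1 : (n:ℝ)⁻¹ * (n:ℝ) = 1 := by
          field_simp
        rw [← Finset.mul_sum] at hc
        calc ε * ((n:ℝ)⁻¹ * ∑ i, g (x i)) - ε^2 * (r - t k)^2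
            = (n:ℝ)⁻¹ * (ε * ∑ i, g (x i) - n • (ε^2 * (r - t k)^2)) := by
              rw [nsmul_eq_mul, mul_sub, ← mul_assoc ((n:ℝ)⁻¹) (n:ℝ), hn1, one_mul]
              ring
          _ ≤ (n:ℝ)⁻¹ * ∑ i, Real.log (1 + ε * g (x i)) := hc
      have hfinal : (n:ℝ)⁻¹ * ∑ i, Real.log (1 + ε * g (x i)) ≤ ε * I := by linarith
      have : ε * ((n:ℝ)⁻¹ * ∑ i, g (x i)) - ε^2 * (r - t k)^2 ≤ ε * I := le_trans hlog hfinal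
      have hdiv : (n:ℝ)⁻¹ * ∑ i, g (x i) - ε * (r - t k)^2 ≤ I := by
        have h2 : ε * ((n:ℝ)⁻¹ * ∑ i, g (x i) - ε * (r - t k)^2) ≤ ε * I := by nlinarith
        exact le_of_mul_le_mul_left h2 hε
      linarith
    by_contra hcon
    push_neg at hcon
    set δ := (n:ℝ)⁻¹ * ∑ i, g (x i) - I with hδ
    have hδpos : 0 < δ := by rw [hδ]; linarith
    set D := (r - t k)^2 with hD
    have hDnn : 0 ≤ D := sq_nonneg _
    have hεc : 0 < min ε₀ (δ / (D + 1)) := lt_min hε₀pos (by positivity)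
    have h2 := hstep _ hεc (min_le_left _ _)
    have h3 : min ε₀ (δ / (D + 1)) ≤ δ / (D + 1) := min_le_right _ _
    have h4 : min ε₀ (δ / (D + 1)) * D ≤ δ / (D + 1) * D :=
      mul_le_mul_of_nonneg_right h3 hDnn
    have h5 : δ / (D + 1) * D < δ := by
      rw [div_mul_eq_mul_div, div_lt_iff₀ (by linarith : (0:ℝ) < D + 1)]
      nlinarith
    have : δ ≤ min ε₀ (δ / (D + 1)) * D := h2
    linarith
  -- value of the LHS
  have hEDFint : ∫ u in (t k)..r, EDF u = (n:ℝ)⁻¹ * ∑ i, g (x i) := by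
    have hEDF' : ∀ u : ℝ, EDF u = ∑ i, (n:ℝ)⁻¹ * (if x i ≤ u then (1:ℝ) else 0) := by
      intro u
      rw [hEDF u, ← Finset.mul_sum]
      congr 1
      exact (Finset.sum_boole _ _).symm
    rw [intervalIntegral.integral_congr (fun u _ => hEDF' u)]
    rw [intervalIntegral.integral_finset_sum
      (fun i _ => (aux_step_intervalIntegrable (x i) (t k) r).const_mul _)]
    have hterm : ∀ i : Fin n, ∫ u in (t k)..r, (n:ℝ)⁻¹ * (if x i ≤ u then (1:ℝ) else 0)
        = (n:ℝ)⁻¹ * g (x i) := by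
      intro i
      rw [intervalIntegral.integral_const_mul, aux_step_integral (x i) htkr']
    rw [Finset.sum_congr rfl (fun i _ => hterm i), ← Finset.mul_sum]
  -- value of the RHS
  have hRHS : ∫ u in (t k)..r, (∫ v in (0:ℝ)..u, fhat v) = ∫ y in Ici (0:ℝ), fhat y * g y := by
    have hfi : ∀ {a b : ℝ}, 0 ≤ a → a ≤ b → IntervalIntegrable fhat volume a b := by
      intro a b ha hab
      apply IntegrableOn.intervalIntegrable
      rw [uIcc_of_le hab]
      exact hfint.mono_set (fun y hy => le_trans ha hy.1)
    have hsplitI : ∫ y in Ici (0:ℝ), fhat y * g y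
        = (∫ y in Ioc 0 (t k), fhat y) * (r - t k) + ∫ y in Ioc (t k) r, fhat y * (r - y) := by
      rw [integral_Ici_eq_integral_Ioi]
      rw [← Ioc_union_Ioi_eq_Ioi (le_of_lt hr0)]
      rw [setIntegral_union (Ioc_disjoint_Ioi le_rfl) measurableSet_Ioi
        (hfg_int.mono_set (fun y hy => le_of_lt hy.1))
        (hfg_int.mono_set (fun y hy => le_of_lt (lt_trans hr0 hy)))]
      have hzero : ∫ y in Ioi r, fhat y * g y = 0 := by
        rw [setIntegral_congr_fun measurableSet_Ioi
          (fun y hy => by show fhat y * g y = (0:ℝ); rw [hgright y (le_of_lt hy)]; ring :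
            EqOn (fun y => fhat y * g y) (fun _ => (0:ℝ)) (Ioi r))]
        simp
      rw [hzero, add_zero]
      rw [← Ioc_union_Ioc_eq_Ioc htk0 htkr']
      rw [setIntegral_union (Ioc_disjoint_Ioc_of_le le_rfl) measurableSet_Ioc
        (hfg_int.mono_set (fun y hy => le_of_lt hy.1))
        (hfg_int.mono_set (fun y hy => le_trans htk0 (le_of_lt hy.1)))]
      congr 1
      · rw [setIntegral_congr_fun measurableSet_Ioc
          (fun y hy => by show fhat y * g y = fhat y * (r - t k); rw [hgleft y hy.2] :
            EqOn (fun y => fhat y * g y) (fun y => fhat y * (r - t k)) (Ioc 0 (t k)))]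
        exact integral_mul_const _ _
      · exact setIntegral_congr_fun measurableSet_Ioc
          (fun y hy => by rw [hgmid y (le_of_lt hy.1) hy.2])
    have hG_cont : ContinuousOn (fun u => ∫ v in (t k)..u, fhat v) (uIcc (t k) r) := by
      apply intervalIntegral.continuousOn_primitive_interval
      rw [uIcc_of_le htkr']
      exact hfint.mono_set (fun y hy => le_trans htk0 hy.1)
    have hsplit : EqOn (fun u => ∫ v in (0:ℝ)..u, fhat v)
        (fun u => (∫ v in (0:ℝ)..(t k), fhat v) + ∫ v in (t k)..u, fhat v)
        (uIcc (t k) r) := by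
      intro u hu
      rw [uIcc_of_le htkr'] at hu
      exact (intervalIntegral.integral_add_adjacent_intervals
        (hfi le_rfl htk0) (hfi htk0 hu.1)).symm
    rw [intervalIntegral.integral_congr hsplit]
    rw [intervalIntegral.integral_add (intervalIntegrable_const)
      (hG_cont.intervalIntegrable)]
    rw [intervalIntegral.integral_const]
    have hF2 : ∫ u in (t k)..r, (∫ v in (t k)..u, fhat v)
        = ∫ y in Ioc (t k) r, (r - y) * fhat y := by
      rw [intervalIntegral.integral_of_le htkr']
      rw [setIntegral_congr_fun measurableSet_Ioc
        (fun u hu => by show (∫ v in (t k)..u, fhat v) = ∫ v in Ioc (t k) u, fhat v; exact intervalIntegral.integral_of_le (le_of_lt hu.1) :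
          EqOn (fun u => ∫ v in (t k)..u, fhat v)
            (fun u => ∫ v in Ioc (t k) u, fhat v) (Ioc (t k) r))]
      exact aux_fubini htkr' (hfint.mono_set (fun y hy => le_trans htk0 (le_of_lt hy.1)))
    rw [hF2, hsplitI]
    rw [intervalIntegral.integral_of_le htk0, smul_eq_mul]
    congr 1
    · ring
    · exact setIntegral_congr_fun measurableSet_Ioc (fun y hy => mul_comm _ _)
  rw [hEDFint, hRHS]
  exact hkey
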